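/- arXiv:1203.6796 — 12 statements merged into one kernel-verified Lean document; each statement's English description precedes it below -/
import Mathlib

section
/- Every natural transformation w from the functor S ↦ ∏_{n∈ℕ} S to the identity functor S ↦ S on the category of commutative R-algebras, such that each component w_S is S-linear, is given by a finite linear combination: there exist m ∈ ℕ and λ_1,…,λ_m ∈ R such that w_S((s_n)_n) = λ_1 s_1 + ⋯ + λ_m s_m for every commutative R-algebra S and every (s_n)_n ∈ ∏_ℕ S. -/
/-- Every `R`-linear natural transformation `w` from the functor
`S ↦ ∏_{n ∈ ℕ} S` to the identity functor `S ↦ S`, on the category of commutative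
`R`-algebras, is given by a finite linear combination with coefficients in `R`. -/
theorem statement0 (R : Type) [CommRing R]
    (w : ∀ (S : Type) [CommRing S] [Algebra R S], (ℕ → S) →ₗ[S] S)
    (hnat : ∀ (S S' : Type) [CommRing S] [Algebra R S] [CommRing S'] [Algebra R S']
      (φ : S →ₐ[R] S') (s : ℕ → S), w S' (fun n => φ (s n)) = φ (w S s)) :
    ∃ (m : ℕ) (l : Fin m → R),
      ∀ (S : Type) [CommRing S] [Algebra R S] (s : ℕ → S),
        w S s = ∑ i : Fin m, algebraMap R S (l i) * s i := by
  classical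
  set P := MvPolynomial ℕ R with hP
  set p : P := w P MvPolynomial.X with hp
  -- key: w S s = aeval s p
  have key : ∀ (S : Type) [CommRing S] [Algebra R S] (s : ℕ → S),
      w S s = MvPolynomial.aeval s p := by
    intro S _ _ s
    have h2 := hnat P S (MvPolynomial.aeval s) MvPolynomial.X
    have h3 : (fun n => (MvPolynomial.aeval (R := R) s) (MvPolynomial.X n)) = s := by
      funext n
      rw [MvPolynomial.aeval_X]
    rw [h3] at h2
    rw [hp]
    exact h2
  set m : ℕ := (p.vars.sup id) + 1 with hm
  have hvars : ∀ i ∈ p.vars, i < m := by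
    intro i hi
    have : id i ≤ p.vars.sup id := Finset.le_sup hi
    simp only [id] at this
    omega
  refine ⟨m, fun i => w R (fun n => if n = (i : ℕ) then 1 else 0), ?_⟩
  intro S _ _ s
  -- truncate s
  set s' : ℕ → S := fun n => if n < m then s n else 0 with hs'
  have htrunc : MvPolynomial.aeval s p = MvPolynomial.aeval s' p := by
    have hsub : (p.vars : Set ℕ) ⊆ {i | i < m} := fun i hi => hvars i (by simpa using hi)
    have h1 := MvPolynomial.aeval_ite_mem_eq_self (R := R) p hsub (s := {i | i < m})
    calc MvPolynomial.aeval s p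
        = MvPolynomial.aeval s (MvPolynomial.aeval
            (fun i => if i ∈ {i | i < m} then MvPolynomial.X i else 0) p) := by rw [h1]
      _ = MvPolynomial.aeval s' p := by
          rw [← AlgHom.comp_apply, MvPolynomial.comp_aeval]
          refine congrArg (fun f => (MvPolynomial.aeval (R := R) f) p) ?_
          funext i
          by_cases h : i < m <;> simp [Set.mem_setOf_eq, hs', h]
  -- s' as finite sum of basis vectors
  have hsum : s' = ∑ i : Fin m, s i • (fun n => if n = (i : ℕ) then (1:S) else 0) := by
    funext n
    by_cases h : n < m
    · rw [Finset.sum_apply]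
      rw [Finset.sum_eq_single (⟨n, h⟩ : Fin m)]
      · simp [hs', h]
      · intro b _ hb
        have : n ≠ (b : ℕ) := fun he => hb (by
          apply Fin.ext; simp [← he])
        simp [this]
      · simp
    · rw [Finset.sum_apply]
      have : ∀ i : Fin m, (s i • fun n => if n = (i : ℕ) then (1:S) else 0) n = 0 := by
        intro i
        have : n ≠ (i : ℕ) := by
          intro he; exact h (he ▸ i.isLt)
        simp [this]
      simp only [this, Finset.sum_const_zero]
      simp [hs', h]
  -- value on basis vectors
  have hbasis : ∀ i : Fin m, w S (fun n => if n = (i : ℕ) then (1:S) else 0)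
      = algebraMap R S (w R (fun n => if n = (i : ℕ) then 1 else 0)) := by
    intro i
    have := hnat R S (Algebra.ofId R S) (fun n => if n = (i : ℕ) then 1 else 0)
    simp only [Algebra.ofId_apply] at this
    rw [← this]
    congr 1
    funext n
    by_cases h : n = (i : ℕ) <;> simp [h]
  calc w S s = MvPolynomial.aeval s p := key S s
    _ = MvPolynomial.aeval s' p := htrunc
    _ = w S s' := (key S s').symm
    _ = ∑ i : Fin m, algebraMap R S (w R (fun n => if n = (i : ℕ) then 1 else 0)) * s i := by
        rw [hsum, map_sum]
        refine Finset.sum_congr rfl fun i _ => ?_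
        rw [LinearMap.map_smul, hbasis i, smul_eq_mul, mul_comm]
end

section
/- For every commutative R-algebra S and every natural transformation f from the functor S' ↦ M ⊗_R S' to a functor of modules 𝕄 (with each component f_{S'} being S'-linear), f is uniquely determined by its component f_R : M → 𝕄(R); that is, the map Hom_𝒦(ℳ, 𝕄) → Hom_R(M, 𝕄(R)), f ↦ f_R, is a bijection. -/
open TensorProduct

universe v

/-- The data of a (covariant) functor of modules on the category of commutative
`R`-algebras: an `S`-module `obj S` for every commutative `R`-algebra `S`, together
with transition maps along `R`-algebra homomorphisms. -/
structure ModuleFunctorData (R : Type) [CommRing R] : Type (v + 1) where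
  obj : ∀ (S : Type) [CommRing S] [Algebra R S], Type v
  addCommGroup : ∀ (S : Type) [CommRing S] [Algebra R S], AddCommGroup (obj S)
  module : ∀ (S : Type) [CommRing S] [Algebra R S],
    @Module S (obj S) _ (addCommGroup S).toAddCommMonoid
  map : ∀ {S S' : Type} [CommRing S] [Algebra R S] [CommRing S'] [Algebra R S'],
    (S →ₐ[R] S') → obj S → obj S'

attribute [instance] ModuleFunctorData.addCommGroup ModuleFunctorData.module

/-- A functor of `𝒦`-modules: a functor from commutative `R`-algebras to abelian groups
with a functorial module structure. -/
structure ModuleFunctor (R : Type) [CommRing R] extends ModuleFunctorData.{v} R :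
    Type (v + 1) where
  map_add : ∀ {S S' : Type} [CommRing S] [Algebra R S] [CommRing S'] [Algebra R S']
    (φ : S →ₐ[R] S') (x y : obj S), map φ (x + y) = map φ x + map φ y
  map_smul : ∀ {S S' : Type} [CommRing S] [Algebra R S] [CommRing S'] [Algebra R S']
    (φ : S →ₐ[R] S') (s : S) (x : obj S), map φ (s • x) = φ s • map φ x
  map_id : ∀ (S : Type) [CommRing S] [Algebra R S] (x : obj S), map (AlgHom.id R S) x = x
  map_comp : ∀ {S S' S'' : Type} [CommRing S] [Algebra R S] [CommRing S'] [Algebra R S']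
    [CommRing S''] [Algebra R S''] (φ : S →ₐ[R] S') (ψ : S' →ₐ[R] S'') (x : obj S),
    map (ψ.comp φ) x = map ψ (map φ x)

/-- Natural `R`-linear transformations from a functor of modules `F` to the
quasi-coherent module `𝒩 : S ↦ S ⊗_R N` associated with an `R`-module `N`. -/
def QCHom (R : Type) [CommRing R] (F : ModuleFunctor.{v} R) (N : Type) [AddCommGroup N]
    [Module R N] :=
  {f : ∀ (S : Type) [CommRing S] [Algebra R S], F.obj S →ₗ[S] S ⊗[R] N //
    ∀ (S S' : Type) [CommRing S] [Algebra R S] [CommRing S'] [Algebra R S']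
      (φ : S →ₐ[R] S') (x : F.obj S),
      f S' (F.map φ x) = LinearMap.rTensor N φ.toLinearMap (f S x)}

section Aux

variable {R : Type} [CommRing R] {M : Type} [AddCommGroup M] [Module R M]
  (F : ModuleFunctor.{0} R)

theorem Fmap_zero {S S' : Type} [CommRing S] [Algebra R S] [CommRing S']
    [Algebra R S'] (φ : S →ₐ[R] S') : F.map φ (0 : F.obj S) = 0 := by
  rw [← zero_smul S (0 : F.obj S), F.map_smul, map_zero, zero_smul]

theorem ofId_comp {S S' : Type} [CommRing S] [Algebra R S] [CommRing S'] [Algebra R S']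
    (φ : S →ₐ[R] S') : φ.comp (Algebra.ofId R S) = Algebra.ofId R S' :=
  AlgHom.ext fun r => by simp [Algebra.ofId_apply, AlgHom.commutes]

noncomputable def myExt (g : M →ₗ[R] F.obj R) (S : Type) [CommRing S] [Algebra R S] :
    (S ⊗[R] M) →ₗ[S] F.obj S :=
  letI : Module R (F.obj S) := Module.compHom _ (algebraMap R S)
  haveI : IsScalarTower R S (F.obj S) := ⟨fun r s x => by
    show (r • s) • x = (algebraMap R S r) • s • x
    rw [Algebra.smul_def, mul_smul]⟩
  LinearMap.liftBaseChange S
    { toFun := fun m => F.map (Algebra.ofId R S) (g m)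
      map_add' := fun x y => by rw [map_add, F.map_add]
      map_smul' := fun r m => by
        show F.map (Algebra.ofId R S) (g (r • m)) = (algebraMap R S r) • F.map (Algebra.ofId R S) (g m)
        rw [map_smul, F.map_smul, Algebra.ofId_apply] }

theorem myExt_tmul (g : M →ₗ[R] F.obj R) (S : Type) [CommRing S] [Algebra R S]
    (s : S) (m : M) : myExt F g S (s ⊗ₜ m) = s • F.map (Algebra.ofId R S) (g m) := by
  letI : Module R (F.obj S) := Module.compHom _ (algebraMap R S)
  haveI : IsScalarTower R S (F.obj S) := ⟨fun r s x => by
    show (r • s) • x = (algebraMap R S r) • s • x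
    rw [Algebra.smul_def, mul_smul]⟩
  exact LinearMap.liftBaseChange_tmul _ _ _ _

theorem myExt_natural (g : M →ₗ[R] F.obj R) (S S' : Type) [CommRing S] [Algebra R S]
    [CommRing S'] [Algebra R S'] (φ : S →ₐ[R] S') (x : S ⊗[R] M) :
    myExt F g S' (LinearMap.rTensor M φ.toLinearMap x) = F.map φ (myExt F g S x) := by
  induction x with
  | zero => simp [Fmap_zero F φ]
  | tmul s m =>
      rw [LinearMap.rTensor_tmul, AlgHom.toLinearMap_apply, myExt_tmul, myExt_tmul,
        F.map_smul, ← F.map_comp, ofId_comp]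
  | add x y hx hy =>
      rw [map_add, map_add, hx, hy, map_add, F.map_add]

end Aux

/-- For every `R`-module `M` and every functor of modules `𝕄`, a natural
linear transformation `f : ℳ → 𝕄` from the quasi-coherent module `ℳ : S ↦ S ⊗_R M` is
uniquely determined by its component at `R`: the map
`Hom_𝒦(ℳ, 𝕄) → Hom_R(M, 𝕄(R))`, `f ↦ f_R`, is a bijection. -/
theorem statement1 (R : Type) [CommRing R] (M : Type) [AddCommGroup M] [Module R M]
    (F : ModuleFunctor.{0} R) :
    Function.Bijective
      (fun f : {f : ∀ (S : Type) [CommRing S] [Algebra R S], (S ⊗[R] M) →ₗ[S] F.obj S //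
          ∀ (S S' : Type) [CommRing S] [Algebra R S] [CommRing S'] [Algebra R S']
            (φ : S →ₐ[R] S') (x : S ⊗[R] M),
            f S' (LinearMap.rTensor M φ.toLinearMap x) = F.map φ (f S x)} =>
        (f.1 R) ∘ₗ (TensorProduct.lid R M).symm.toLinearMap) := by
  constructor
  · rintro ⟨f, hf⟩ ⟨f', hf'⟩ h
    simp only [Subtype.mk.injEq] at h ⊢
    have h1 : ∀ m : M, f R ((1:R) ⊗ₜ m) = f' R ((1:R) ⊗ₜ m) := fun m => by
      have := LinearMap.congr_fun h m
      simpa using this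
    have hR : f R = f' R := by
      apply TensorProduct.ext'
      intro r m
      have key : (r ⊗ₜ m : R ⊗[R] M) = r • ((1:R) ⊗ₜ m) := by
        simp [TensorProduct.smul_tmul']
      rw [key, map_smul, map_smul, h1 m]
    funext S _ _
    apply LinearMap.ext
    intro x
    induction x with
    | zero => simp
    | tmul s m =>
        have key : (s ⊗ₜ m : S ⊗[R] M)
            = s • LinearMap.rTensor M (Algebra.ofId R S).toLinearMap ((1 : R) ⊗ₜ m) := by
          simp [TensorProduct.smul_tmul', Algebra.ofId_apply, Algebra.algebraMap_eq_smul_one]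
        rw [key, map_smul, map_smul, hf R S (Algebra.ofId R S), hf' R S (Algebra.ofId R S), hR]
    | add x y hx hy => rw [map_add, map_add, hx, hy]
  · intro g
    refine ⟨⟨fun S _ _ => myExt F g S, fun S S' _ _ _ _ φ x => myExt_natural F g S S' φ x⟩, ?_⟩
    apply LinearMap.ext
    intro m
    simp only [LinearMap.coe_comp, Function.comp_apply, LinearEquiv.coe_coe,
      TensorProduct.lid_symm_apply]
    rw [myExt_tmul, one_smul]
    have : Algebra.ofId R R = AlgHom.id R R := AlgHom.ext fun r => by
      simp [Algebra.ofId_apply]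
    rw [this, F.map_id]
end

section
/- Let M and M' be R-modules. Every natural transformation f from the functor S ↦ Hom_R(M,S) to the functor S ↦ M' ⊗_R S, with each component S-linear, arises from a unique element of M ⊗_R M': explicitly, an element ∑_i m_i ⊗ m'_i determines the transformation w ↦ ∑_i w(m_i)·m'_i, and this assignment M ⊗_R M' → Hom_𝒦(ℳ*, ℳ') is a bijection. -/
open TensorProduct

lemma smul_eq_rTensor_mulLeft (R : Type) [CommRing R] (M' : Type) [AddCommGroup M'] [Module R M']
    (T : Type) [CommRing T] [Algebra R T] (ε : T) (u : T ⊗[R] M') :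
    ε • u = LinearMap.rTensor M' (LinearMap.mulLeft R ε) u := by
  induction u using TensorProduct.induction_on with
  | zero => simp
  | tmul a b => simp [TensorProduct.smul_tmul', smul_eq_mul]
  | add a b ha hb => simp [smul_add, ha, hb]

/-- `Hom_𝒦(ℳ*, ℳ') = M ⊗_R M'`.  Every natural transformation `f` from the
module scheme `S ↦ Hom_R(M, S)` to the quasi-coherent module `S ↦ S ⊗_R M'` (with
`S`-linear components) arises from a unique element `x ∈ M ⊗_R M'`, via
`w ↦ (rTensor M' w) x`, i.e. `∑ m_i ⊗ m'_i` acts by `w ↦ ∑ w(m_i) · m'_i`. -/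
theorem statement3 (R : Type) [CommRing R] (M : Type) [AddCommGroup M] [Module R M]
    (M' : Type) [AddCommGroup M'] [Module R M']
    (f : {f : ∀ (S : Type) [CommRing S] [Algebra R S], (M →ₗ[R] S) →ₗ[S] S ⊗[R] M' //
        ∀ (S S' : Type) [CommRing S] [Algebra R S] [CommRing S'] [Algebra R S']
          (φ : S →ₐ[R] S') (w : M →ₗ[R] S),
          f S' (φ.toLinearMap ∘ₗ w) = LinearMap.rTensor M' φ.toLinearMap (f S w)}) :
    ∃! x : M ⊗[R] M',
      ∀ (S : Type) [CommRing S] [Algebra R S] (w : M →ₗ[R] S),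
        f.1 S w = LinearMap.rTensor M' w x := by
  classical
  letI : Module Rᵐᵒᵖ M := Module.compHom M ((RingHom.id R).fromOpposite mul_comm)
  haveI : IsCentralScalar R M := ⟨fun r m => rfl⟩
  set T₀ := TrivSqZeroExt R M with hT₀
  let w₀ : M →ₗ[R] T₀ := TrivSqZeroExt.inrHom R M
  let s₀ : T₀ →ₗ[R] M := TrivSqZeroExt.sndHom R M
  let y : T₀ ⊗[R] M' := f.1 T₀ w₀
  let x : M ⊗[R] M' := LinearMap.rTensor M' s₀ y
  have hsw : s₀ ∘ₗ w₀ = LinearMap.id :=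
    LinearMap.ext fun m => TrivSqZeroExt.snd_inr R m
  have main : ∀ (S : Type) [CommRing S] [Algebra R S] (w : M →ₗ[R] S),
      f.1 S w = LinearMap.rTensor M' w x := by
    intro S _ _ w
    set T := TrivSqZeroExt S S with hT
    let ι : S →ₐ[R] T := TrivSqZeroExt.inlAlgHom R S S
    let g : M →ₗ[R] T := ((TrivSqZeroExt.inrHom S S).restrictScalars R) ∘ₗ w
    have hg_apply : ∀ m, g m = TrivSqZeroExt.inr (w m) := fun m => rfl
    have hgsq : ∀ a b : S, (TrivSqZeroExt.inr a : T) * TrivSqZeroExt.inr b = 0 :=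
      fun a b => TrivSqZeroExt.inr_mul_inr _ a b
    let φ₀ : T₀ →ₐ[R] T := TrivSqZeroExt.lift (Algebra.ofId R T)
      (((TrivSqZeroExt.inrHom S S).restrictScalars R) ∘ₗ w)
      (fun a b => hgsq _ _)
      (fun r m => by
        show TrivSqZeroExt.inr (w (r • m)) = Algebra.ofId R T r * TrivSqZeroExt.inr (w m)
        rw [map_smul]
        show TrivSqZeroExt.inr (r • w m)
          = TrivSqZeroExt.inl (algebraMap R S r) * TrivSqZeroExt.inr (w m)
        rw [TrivSqZeroExt.inl_mul_inr, algebraMap_smul])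
      (fun r m => by
        show TrivSqZeroExt.inr (w (MulOpposite.op r • m))
          = TrivSqZeroExt.inr (w m) * Algebra.ofId R T r
        rw [op_smul_eq_smul, map_smul]
        show TrivSqZeroExt.inr (r • w m)
          = TrivSqZeroExt.inr (w m) * TrivSqZeroExt.inl (algebraMap R S r)
        rw [TrivSqZeroExt.inr_mul_inl, op_smul_eq_mul]
        congr 1
        rw [← algebraMap_smul S r (w m), smul_eq_mul, mul_comm])
    have hφw : φ₀.toLinearMap ∘ₗ w₀ = g := by
      refine LinearMap.ext fun m => ?_
      show φ₀ (TrivSqZeroExt.inr m) = g m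
      dsimp only [φ₀]
      erw [TrivSqZeroExt.lift_apply_inr]
    have nat := f.2 T₀ T φ₀ w₀
    rw [hφw] at nat
    let ε : T := TrivSqZeroExt.inr (1 : S)
    have hg2 : g = ε • (ι.toLinearMap ∘ₗ w) := by
      refine LinearMap.ext fun m => ?_
      show TrivSqZeroExt.inr (w m) = ε * TrivSqZeroExt.inl (w m)
      rw [show ε = TrivSqZeroExt.inr (1 : S) from rfl, TrivSqZeroExt.inr_mul_inl,
        op_smul_eq_mul, one_mul]
    have lin : f.1 T g = ε • LinearMap.rTensor M' ι.toLinearMap (f.1 S w) := by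
      rw [hg2, map_smul, f.2 S T ι w]
    let p : T →ₗ[R] S := (TrivSqZeroExt.sndHom S S).restrictScalars R
    have comp1 : p ∘ₗ LinearMap.mulLeft R ε ∘ₗ ι.toLinearMap = LinearMap.id := by
      refine LinearMap.ext fun s => ?_
      show TrivSqZeroExt.snd (ε * TrivSqZeroExt.inl s) = s
      rw [show ε = TrivSqZeroExt.inr (1 : S) from rfl, TrivSqZeroExt.inr_mul_inl,
        op_smul_eq_mul, one_mul, TrivSqZeroExt.snd_inr]
    have comp2 : p ∘ₗ φ₀.toLinearMap = w ∘ₗ s₀ := by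
      apply TrivSqZeroExt.linearMap_ext
      · intro r
        show TrivSqZeroExt.snd (φ₀ (TrivSqZeroExt.inl r)) = w (TrivSqZeroExt.snd
          (TrivSqZeroExt.inl r : T₀))
        dsimp only [φ₀]
        erw [TrivSqZeroExt.lift_apply_inl, TrivSqZeroExt.snd_inl]
        show TrivSqZeroExt.snd (TrivSqZeroExt.inl (algebraMap R S r) : T) = w 0
        rw [TrivSqZeroExt.snd_inl, map_zero]
      · intro m
        show TrivSqZeroExt.snd (φ₀ (TrivSqZeroExt.inr m)) = w (TrivSqZeroExt.snd
          (TrivSqZeroExt.inr m : T₀))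
        dsimp only [φ₀]
        erw [TrivSqZeroExt.lift_apply_inr, TrivSqZeroExt.snd_inr]
        exact TrivSqZeroExt.snd_inr S (w m)
    have step : LinearMap.rTensor M' p (f.1 T g) = f.1 S w := by
      rw [lin, smul_eq_rTensor_mulLeft, ← LinearMap.comp_apply, ← LinearMap.comp_apply,
        ← LinearMap.rTensor_comp, ← LinearMap.rTensor_comp, LinearMap.comp_assoc, comp1,
        LinearMap.rTensor_id, LinearMap.id_apply]
    rw [← step, nat, ← LinearMap.comp_apply, ← LinearMap.rTensor_comp, comp2,
      LinearMap.rTensor_comp, LinearMap.comp_apply]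
  refine ⟨x, main, ?_⟩
  intro x' hx'
  have h1 := hx' T₀ w₀
  have h2 := main T₀ w₀
  have cancel : ∀ z : M ⊗[R] M', LinearMap.rTensor M' s₀ (LinearMap.rTensor M' w₀ z) = z := by
    intro z
    rw [← LinearMap.comp_apply, ← LinearMap.rTensor_comp, hsw, LinearMap.rTensor_id,
      LinearMap.id_apply]
  calc x' = LinearMap.rTensor M' s₀ (LinearMap.rTensor M' w₀ x') := (cancel x').symm
    _ = LinearMap.rTensor M' s₀ (f.1 T₀ w₀) := by rw [← h1]
    _ = LinearMap.rTensor M' s₀ (LinearMap.rTensor M' w₀ x) := by rw [h2]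
    _ = x := cancel x
end

section
/- For every R-module M, the map M → Hom_𝒦(ℳ*, 𝒦) sending m to the natural transformation w ↦ w(m) is a bijection; i.e., quasi-coherent functors of modules are reflexive: ℳ** = ℳ, even when M is not finitely generated. -/
/-- Quasi-coherent modules are reflexive, `ℳ** = ℳ`, for an arbitrary
`R`-module `M`: every natural transformation `f : ℳ* → 𝒦` with `S`-linear components
(where `ℳ*(S) = Hom_R(M,S)` and `𝒦(S) = S`) is evaluation at a unique element `m ∈ M`;
that is, `m ↦ (w ↦ w m)` is a bijection `M → Hom_𝒦(ℳ*, 𝒦)`. -/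
theorem statement4 (R : Type) [CommRing R] (M : Type) [AddCommGroup M] [Module R M]
    (f : {f : ∀ (S : Type) [CommRing S] [Algebra R S], (M →ₗ[R] S) →ₗ[S] S //
        ∀ (S S' : Type) [CommRing S] [Algebra R S] [CommRing S'] [Algebra R S']
          (φ : S →ₐ[R] S') (w : M →ₗ[R] S),
          f S' (φ.toLinearMap ∘ₗ w) = φ (f S w)}) :
    ∃! m : M, ∀ (S : Type) [CommRing S] [Algebra R S] (w : M →ₗ[R] S),
      f.1 S w = w m := by
  letI : Module Rᵐᵒᵖ M := Module.compHom M ((RingHom.id R).fromOpposite mul_comm)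
  haveI : IsCentralScalar R M := ⟨fun r m => rfl⟩
  let w₀ : M →ₗ[R] TrivSqZeroExt R M := TrivSqZeroExt.inrHom R M
  set a := f.1 (TrivSqZeroExt R M) w₀ with ha
  have hfst : a.fst = 0 := by
    have h := f.2 (TrivSqZeroExt R M) R (TrivSqZeroExt.fstHom R R M) w₀
    have h0 : (TrivSqZeroExt.fstHom R R M).toLinearMap ∘ₗ w₀ = 0 := by
      refine LinearMap.ext fun x => ?_
      simp [w₀]
    rw [h0, map_zero] at h
    exact h.symm
  have ha' : a = TrivSqZeroExt.inr a.snd :=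
    TrivSqZeroExt.ext (by simp [hfst]) (by simp)
  have key : ∀ (S : Type) [CommRing S] [Algebra R S] (w : M →ₗ[R] S),
      f.1 S w = w a.snd := by
    intro S _ _ w
    let g : M →ₗ[R] TrivSqZeroExt S S :=
      ((TrivSqZeroExt.inrHom S S).restrictScalars R) ∘ₗ w
    have hg : ∀ x y, g x * g y = 0 := fun x y => TrivSqZeroExt.inr_mul_inr S (w x) (w y)
    let φ : TrivSqZeroExt R M →ₐ[R] TrivSqZeroExt S S :=
      TrivSqZeroExt.liftEquivOfComm ⟨g, hg⟩
    have hφinr : ∀ x : M, φ (TrivSqZeroExt.inr x) = TrivSqZeroExt.inr (w x) := by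
      intro x
      rw [show φ = TrivSqZeroExt.lift (Algebra.ofId R (TrivSqZeroExt S S)) g _ _ _ from
        TrivSqZeroExt.liftEquivOfComm_apply _, TrivSqZeroExt.lift_apply_inr]
      rfl
    have nat1 := f.2 (TrivSqZeroExt R M) (TrivSqZeroExt S S) φ w₀
    have hcomp : φ.toLinearMap ∘ₗ w₀ = g := by
      refine LinearMap.ext fun x => ?_
      simpa [w₀, g] using hφinr x
    rw [hcomp, ← ha] at nat1
    -- nat1 : f.1 (TrivSqZeroExt S S) g = φ a
    have nat2 := f.2 S (TrivSqZeroExt S S) (TrivSqZeroExt.inlAlgHom R S S) w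
    have hmul : ∀ s : S, (TrivSqZeroExt.inr (1 : S) : TrivSqZeroExt S S)
        * TrivSqZeroExt.inl s = TrivSqZeroExt.inr s := by
      intro s
      rw [TrivSqZeroExt.inr_mul_inl, op_smul_eq_mul, one_mul]
    have hsmul : g = (TrivSqZeroExt.inr (1 : S) : TrivSqZeroExt S S) •
        ((TrivSqZeroExt.inlAlgHom R S S).toLinearMap ∘ₗ w) := by
      refine LinearMap.ext fun x => ?_
      simp only [LinearMap.smul_apply, LinearMap.coe_comp, Function.comp_apply,
        LinearMap.coe_restrictScalars, g, smul_eq_mul]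
      rw [AlgHom.toLinearMap_apply, TrivSqZeroExt.inlAlgHom_apply, hmul]
      rfl
    have chain : (TrivSqZeroExt.inr (w a.snd) : TrivSqZeroExt S S)
        = TrivSqZeroExt.inr (f.1 S w) := by
      calc (TrivSqZeroExt.inr (w a.snd) : TrivSqZeroExt S S)
          = φ (TrivSqZeroExt.inr a.snd) := (hφinr a.snd).symm
        _ = φ a := by rw [← ha']
        _ = f.1 (TrivSqZeroExt S S) g := nat1.symm
        _ = TrivSqZeroExt.inr (1 : S) •
              f.1 (TrivSqZeroExt S S) ((TrivSqZeroExt.inlAlgHom R S S).toLinearMap ∘ₗ w) := by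
            rw [hsmul, map_smul]
        _ = TrivSqZeroExt.inr (1 : S) • (TrivSqZeroExt.inl (f.1 S w) : TrivSqZeroExt S S) := by
            rw [nat2]; rfl
        _ = TrivSqZeroExt.inr (f.1 S w) := by rw [smul_eq_mul, hmul]
    exact (TrivSqZeroExt.inr_injective chain).symm
  refine ⟨a.snd, key, ?_⟩
  intro m' hm'
  have h := hm' (TrivSqZeroExt R M) w₀
  rw [← ha, ha'] at h
  exact (TrivSqZeroExt.inr_injective h).symm
end

section
/- (Adjoint functors formula) Let i : R → S be a morphism of commutative rings, 𝕄 a functor of modules on commutative R-algebras, and 𝕄' a functor of modules on commutative S-algebras. Then there is a natural bijection between natural S-linear transformations from the restriction i*𝕄 (S' ↦ 𝕄(S')) to 𝕄', and natural R-linear transformations from 𝕄 to i_*𝕄' (R' ↦ 𝕄'(S ⊗_R R')). -/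
open TensorProduct

universe v

/-- The multiplication map `S ⊗[R] T →ₐ[S] T` for an `S`-algebra `T`. -/
noncomputable def muMap (R S T : Type) [CommRing R] [CommRing S] [Algebra R S] [CommRing T]
    [Algebra R T] [Algebra S T] [IsScalarTower R S T] : S ⊗[R] T →ₐ[S] T :=
  Algebra.TensorProduct.lift (Algebra.ofId S T) (IsScalarTower.toAlgHom R T T)
    (fun _ _ => Commute.all _ _)

@[simp] lemma muMap_tmul (R S T : Type) [CommRing R] [CommRing S] [Algebra R S] [CommRing T]
    [Algebra R T] [Algebra S T] [IsScalarTower R S T] (s : S) (t : T) :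
    muMap R S T (s ⊗ₜ t) = algebraMap S T s * t := rfl

/-- Formula of adjoint functors: for a commutative `R`-algebra `S`, a
functor of modules `𝕄` over commutative `R`-algebras and a functor of modules `𝕄'`
over commutative `S`-algebras, there is a natural bijection
`Hom_𝒮(i*𝕄, 𝕄') = Hom_𝒦(𝕄, i_*𝕄')`: every natural `R`-linear transformation
`h : 𝕄 → i_*𝕄'` (where `(i_*𝕄')(R') = 𝕄'(S ⊗_R R')`, with `R'`-linearity expressed
through the inclusion `R' → S ⊗_R R'`) corresponds to a unique natural `S`-linear
transformation `g : i*𝕄 → 𝕄'` via `h_{R'} = g_{S ⊗ R'} ∘ (𝕄(R') → 𝕄(S ⊗ R'))`. -/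
theorem statement5 (R : Type) [CommRing R] (S : Type) [CommRing S] [Algebra R S]
    (F : ModuleFunctor.{0} R) (G : ModuleFunctor.{0} S)
    (h : ∀ (R' : Type) [CommRing R'] [Algebra R R'], F.obj R' → G.obj (S ⊗[R] R'))
    (h_add : ∀ (R' : Type) [CommRing R'] [Algebra R R'] (x y : F.obj R'),
      h R' (x + y) = h R' x + h R' y)
    (h_smul : ∀ (R' : Type) [CommRing R'] [Algebra R R'] (r : R') (x : F.obj R'),
      h R' (r • x) = (Algebra.TensorProduct.includeRight r : S ⊗[R] R') • h R' x)
    (h_nat : ∀ (R' R'' : Type) [CommRing R'] [Algebra R R'] [CommRing R''] [Algebra R R'']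
      (ψ : R' →ₐ[R] R'') (x : F.obj R'),
      h R'' (F.map ψ x)
        = G.map (Algebra.TensorProduct.map (AlgHom.id S S) ψ) (h R' x)) :
    ∃! g : {g : ∀ (T : Type) [CommRing T] [Algebra R T] [Algebra S T] [IsScalarTower R S T],
          F.obj T →ₗ[T] G.obj T //
        ∀ (T T' : Type) [CommRing T] [Algebra R T] [Algebra S T] [IsScalarTower R S T]
          [CommRing T'] [Algebra R T'] [Algebra S T'] [IsScalarTower R S T']
          (φ : T →ₐ[S] T') (x : F.obj T),
          g T' (F.map (AlgHom.restrictScalars R φ) x) = G.map φ (g T x)},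
      ∀ (R' : Type) [CommRing R'] [Algebra R R'] (x : F.obj R'),
        h R' x = g.1 (S ⊗[R] R') (F.map Algebra.TensorProduct.includeRight x) := by
  classical
  have key : ∀ (T : Type) [CommRing T] [Algebra R T],
      (muMap R S (S ⊗[R] T)).comp
        (Algebra.TensorProduct.map (AlgHom.id S S) Algebra.TensorProduct.includeRight)
      = AlgHom.id S (S ⊗[R] T) := by
    intro T _ _
    apply Algebra.TensorProduct.ext'
    intro s t
    simp [Algebra.TensorProduct.algebraMap_apply, Algebra.TensorProduct.tmul_mul_tmul]
  refine ⟨⟨fun T _ _ _ _ =>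
    { toFun := fun x => G.map (muMap R S T) (h T x)
      map_add' := fun x y => by rw [h_add, G.map_add]
      map_smul' := fun t x => by
        rw [RingHom.id_apply, h_smul, G.map_smul]
        congr 1
        show muMap R S T ((1 : S) ⊗ₜ t) = t
        simp }, ?_⟩, ?_, ?_⟩
  · intro T T' _ _ _ _ _ _ _ _ φ x
    show G.map (muMap R S T') (h T' (F.map (AlgHom.restrictScalars R φ) x))
        = G.map φ (G.map (muMap R S T) (h T x))
    rw [h_nat, ← G.map_comp, ← G.map_comp]
    congr 1
    apply Algebra.TensorProduct.ext'
    intro s t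
    simp [Algebra.TensorProduct.map_tmul, mul_comm, map_mul,
      AlgHom.commutes]
  · intro R' _ _ x
    show h R' x = G.map (muMap R S (S ⊗[R] R')) (h (S ⊗[R] R') (F.map
      Algebra.TensorProduct.includeRight x))
    rw [h_nat, ← G.map_comp, key, G.map_id]
  · rintro ⟨g', hg'⟩ hf
    apply Subtype.ext
    funext T
    funext _ _ _ _
    apply LinearMap.ext
    intro x
    have h2 := hg' (S ⊗[R] T) T (muMap R S T)
      (F.map Algebra.TensorProduct.includeRight x)
    rw [← F.map_comp] at h2
    have hid : (AlgHom.restrictScalars R (muMap R S T)).comp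
        (Algebra.TensorProduct.includeRight : T →ₐ[R] S ⊗[R] T) = AlgHom.id R T := by
      ext t
      simp
    rw [hid, F.map_id, ← hf T x] at h2
    exact h2
end

section
/- For every functor of R-modules 𝕄 and every commutative R-algebra S, 𝕄*(S), defined as the set of S-linear natural transformations from 𝕄 restricted to S-algebras to the identity functor, is in natural bijection with the set of R-linear natural transformations from 𝕄 to the functor S' ↦ S ⊗_R S'. -/
open TensorProduct

universe v

/-- `𝕄*(S)`: the set of `S`-linear natural transformations, over commutative
`S`-algebras `T`, from `𝕄` restricted to `S`-algebras to the identity functor. -/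
def DualAt (R : Type) [CommRing R] (F : ModuleFunctor.{0} R) (S : Type) [CommRing S]
    [Algebra R S] :=
  {u : ∀ (T : Type) [CommRing T] [Algebra R T] [Algebra S T] [IsScalarTower R S T],
      F.obj T →ₗ[T] T //
    ∀ (T T' : Type) [CommRing T] [Algebra R T] [Algebra S T] [IsScalarTower R S T]
      [CommRing T'] [Algebra R T'] [Algebra S T'] [IsScalarTower R S T']
      (φ : T →ₐ[S] T') (x : F.obj T),
      u T' (F.map (AlgHom.restrictScalars R φ) x) = φ (u T x)}


noncomputable def mu (R S T : Type) [CommRing R] [CommRing S] [CommRing T]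
    [Algebra R S] [Algebra R T] [Algebra S T] [IsScalarTower R S T] :
    T ⊗[R] S →ₗ[T] T :=
  TensorProduct.AlgebraTensorModule.lift
    (LinearMap.toSpanSingleton T (S →ₗ[R] T) (IsScalarTower.toAlgHom R S T).toLinearMap)

@[simp] lemma mu_tmul (R S T : Type) [CommRing R] [CommRing S] [CommRing T]
    [Algebra R S] [Algebra R T] [Algebra S T] [IsScalarTower R S T] (t : T) (s : S) :
    mu R S T (t ⊗ₜ s) = algebraMap S T s * t := by
  simp [mu, LinearMap.toSpanSingleton, Algebra.smul_def, mul_comm]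

lemma mu_natural (R S T T' : Type) [CommRing R] [CommRing S] [CommRing T] [CommRing T']
    [Algebra R S] [Algebra R T] [Algebra S T] [IsScalarTower R S T]
    [Algebra R T'] [Algebra S T'] [IsScalarTower R S T']
    (φ : T →ₐ[S] T') (y : T ⊗[R] S) :
    mu R S T' (LinearMap.rTensor S (AlgHom.restrictScalars R φ).toLinearMap y)
      = φ (mu R S T y) := by
  induction y with
  | zero => simp
  | add a b ha hb => simp only [map_add, ha, hb]
  | tmul t s =>
      simp only [LinearMap.rTensor_tmul, AlgHom.toLinearMap_apply, AlgHom.coe_restrictScalars',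
        mu_tmul, map_mul]
      congr 1
      exact (AlgHom.commutes φ s).symm

lemma key (R S : Type) [CommRing R] [CommRing S] [Algebra R S]
    (R' : Type) [CommRing R'] [Algebra R R'] (y : R' ⊗[R] S) :
    (TensorProduct.comm R S R') (mu R S (S ⊗[R] R')
      (LinearMap.rTensor S
        (Algebra.TensorProduct.includeRight (R := R) (A := S) (B := R')).toLinearMap y)) = y := by
  induction y with
  | zero => simp
  | add a b ha hb => simp only [map_add, ha, hb]
  | tmul t s =>
      simp only [LinearMap.rTensor_tmul, AlgHom.toLinearMap_apply,
        Algebra.TensorProduct.includeRight_apply, mu_tmul]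
      rw [show (algebraMap S (S ⊗[R] R')) s * ((1 : S) ⊗ₜ[R] t) = s ⊗ₜ[R] t by
        simp [Algebra.TensorProduct.algebraMap_apply, Algebra.TensorProduct.tmul_mul_tmul]]
      simp

noncomputable def phimul (R S T : Type) [CommRing R] [CommRing S] [CommRing T]
    [Algebra R S] [Algebra R T] [Algebra S T] [IsScalarTower R S T] :
    (S ⊗[R] T) →ₐ[S] T :=
  Algebra.TensorProduct.lift (Algebra.ofId S T) (AlgHom.id R T)
    (fun _ _ => Commute.all _ _)

lemma phimul_comm_symm (R S T : Type) [CommRing R] [CommRing S] [CommRing T]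
    [Algebra R S] [Algebra R T] [Algebra S T] [IsScalarTower R S T] (y : T ⊗[R] S) :
    phimul R S T ((TensorProduct.comm R S T).symm y) = mu R S T y := by
  induction y with
  | zero => simp
  | add a b ha hb => simp only [map_add, ha, hb]
  | tmul t s =>
      simp [phimul, Algebra.TensorProduct.lift_tmul, Algebra.ofId_apply]

noncomputable def uCand (R : Type) [CommRing R] (F : ModuleFunctor.{0} R)
    (S : Type) [CommRing S] [Algebra R S] (v : QCHom R F S) : DualAt R F S :=
  ⟨fun T _ _ _ _ => (mu R S T).comp (v.1 T), by
    intro T T' _ _ _ _ _ _ _ _ φ x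
    simp only [LinearMap.comp_apply]
    rw [v.2 T T' (AlgHom.restrictScalars R φ) x, mu_natural]⟩

lemma det (R : Type) [CommRing R] (F : ModuleFunctor.{0} R)
    (S : Type) [CommRing S] [Algebra R S] (v : QCHom R F S) (u : DualAt R F S)
    (h : ∀ (R' : Type) [CommRing R'] [Algebra R R'] (x : F.obj R'),
        v.1 R' x = (TensorProduct.comm R S R')
          (u.1 (S ⊗[R] R') (F.map Algebra.TensorProduct.includeRight x)))
    (T : Type) [CommRing T] [Algebra R T] [Algebra S T] [IsScalarTower R S T]
    (x : F.obj T) :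
    u.1 T x = phimul R S T ((TensorProduct.comm R S T).symm (v.1 T x)) := by
  have h1 := u.2 (S ⊗[R] T) T (phimul R S T) (F.map Algebra.TensorProduct.includeRight x)
  rw [← F.map_comp] at h1
  have heq : (AlgHom.restrictScalars R (phimul R S T)).comp
      Algebra.TensorProduct.includeRight = AlgHom.id R T := by
    ext t
    simp [phimul, Algebra.TensorProduct.lift_tmul]
  rw [heq, F.map_id] at h1
  have h2 : u.1 (S ⊗[R] T) (F.map Algebra.TensorProduct.includeRight x)
      = (TensorProduct.comm R S T).symm (v.1 T x) := by
    rw [h T x]; simp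
  rw [h1, h2]

/-- `𝕄*(S) = Hom_𝒦(𝕄, 𝒮)`: for every functor of `R`-modules `𝕄` and
commutative `R`-algebra `S`, every natural `R`-linear transformation `v : 𝕄 → 𝒮`
(where `𝒮 : R' ↦ R' ⊗_R S` is the quasi-coherent module of `S`) comes from a unique
element `u ∈ 𝕄*(S)`, via `v_{R'}(x) = u_{S ⊗ R'}(x|_{S ⊗ R'})` (composed with the
symmetry of the tensor product). -/

theorem statement6 (R : Type) [CommRing R] (F : ModuleFunctor.{0} R)
    (S : Type) [CommRing S] [Algebra R S] (v : QCHom R F S) :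
    ∃! u : DualAt R F S,
      ∀ (R' : Type) [CommRing R'] [Algebra R R'] (x : F.obj R'),
        v.1 R' x
          = (TensorProduct.comm R S R')
              (u.1 (S ⊗[R] R') (F.map Algebra.TensorProduct.includeRight x)) := by
  
  have hprop : ∀ (R' : Type) [CommRing R'] [Algebra R R'] (x : F.obj R'),
      v.1 R' x = (TensorProduct.comm R S R')
        ((uCand R F S v).1 (S ⊗[R] R') (F.map Algebra.TensorProduct.includeRight x)) := by
    intro R' _ _ x
    show v.1 R' x = (TensorProduct.comm R S R')
      (mu R S (S ⊗[R] R') (v.1 (S ⊗[R] R') (F.map Algebra.TensorProduct.includeRight x)))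
    rw [v.2 R' (S ⊗[R] R') Algebra.TensorProduct.includeRight x, key]
  refine ⟨uCand R F S v, hprop, ?_⟩
  intro u hu
  apply Subtype.ext
  funext T instT instRT instST instTow
  apply LinearMap.ext; intro x
  rw [det R F S v u hu T x, det R F S v (uCand R F S v) hprop T x]
end

section
/- Let 𝕄 be a functor of modules over a commutative ring R whose dual 𝕄* embeds into the dual of the quasi-coherent module associated to 𝕄(R) (i.e., 𝕄 is D-proquasi-coherent, meaning natural linear transformations 𝕄 → 𝒮 are determined by their value at R for every algebra S). Then for every R-module N, the map Hom_𝒦(𝕄, 𝒩) → Hom_R(𝕄(R), N), f ↦ f_R, is injective. -/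
open TensorProduct

universe v

private lemma baseChange_rTensor_comm {R : Type} [CommRing R] {M P : Type}
    [AddCommGroup M] [Module R M] [AddCommGroup P] [Module R P]
    (g : M →ₗ[R] P) {T T' : Type} [CommRing T] [Algebra R T] [CommRing T'] [Algebra R T']
    (φ : T →ₐ[R] T') (y : T ⊗[R] M) :
    g.baseChange T' (LinearMap.rTensor M φ.toLinearMap y)
      = LinearMap.rTensor P φ.toLinearMap (g.baseChange T y) := by
  induction y using TensorProduct.induction_on with
  | zero => simp
  | tmul t m => simp
  | add a b ha hb => simp [map_add, ha, hb]

/-- If `𝕄` is D-proquasi-coherent (natural linear transformations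
`𝕄 → 𝒮` are determined by their component at `R`, for every commutative `R`-algebra
`S`), then for every `R`-module `N` the map `Hom_𝒦(𝕄, 𝒩) → Hom_R(𝕄(R), N)`,
`f ↦ f_R`, is injective. -/
theorem statement8 (R : Type) [CommRing R] (F : ModuleFunctor.{0} R)
    (hyp : ∀ (S : Type) [CommRing S] [Algebra R S],
      Function.Injective (fun f : QCHom R F S => f.1 R)) :
    ∀ (N : Type) [AddCommGroup N] [Module R N],
      Function.Injective (fun f : QCHom R F N => f.1 R) := by
  intro N _ _ f g h
  letI : Module Rᵐᵒᵖ N := Module.compHom N ((RingHom.id R).fromOpposite mul_comm)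
  letI : IsCentralScalar R N := ⟨fun r n => rfl⟩
  set S := TrivSqZeroExt R N with hS
  let inr : N →ₗ[R] S := TrivSqZeroExt.inrHom R N
  let snd : S →ₗ[R] N := TrivSqZeroExt.sndHom R N
  -- pushforward along `inr`
  let push : QCHom R F N → QCHom R F S := fun u =>
    ⟨fun T _ _ => (inr.baseChange T).comp (u.1 T), by
      intro T T' _ _ _ _ φ x
      simp only [LinearMap.coe_comp, Function.comp_apply]
      rw [u.2 T T' φ x, baseChange_rTensor_comm]⟩
  have hpush : push f = push g := by
    apply hyp S
    show (inr.baseChange R).comp (f.1 R) = (inr.baseChange R).comp (g.1 R)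
    have h' : f.1 R = g.1 R := h
    rw [h']
  -- retract along `snd`
  apply Subtype.ext
  funext T _ _
  apply LinearMap.ext
  intro x
  have hx : inr.baseChange T (f.1 T x) = inr.baseChange T (g.1 T x) :=
    congrFun (congrArg (fun (u : QCHom R F S) => (u.1 T : F.obj T → T ⊗[R] S)) hpush) x
  have hret : ∀ y : T ⊗[R] N, snd.baseChange T (inr.baseChange T y) = y := by
    intro y
    induction y using TensorProduct.induction_on with
    | zero => simp
    | tmul t m => simp [inr, snd, TrivSqZeroExt.inrHom, TrivSqZeroExt.sndHom]; rfl
    | add a b ha hb => simp [map_add, ha, hb]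
  calc f.1 T x = snd.baseChange T (inr.baseChange T (f.1 T x)) := (hret _).symm
    _ = snd.baseChange T (inr.baseChange T (g.1 T x)) := by rw [hx]
    _ = g.1 T x := hret _
end

section
/- Over a field K, a functor of 𝒦-modules 𝕄 is D-proquasi-coherent if and only if the natural map 𝕄*(K) → Hom_K(𝕄(K), K), w ↦ w_K, is injective. In particular, injectivity of evaluation-at-K on the dual for the single module N = K suffices to give injectivity of Hom_𝒦(𝕄, 𝒩) → Hom_K(𝕄(K), N) for all K-vector spaces N. -/
open TensorProduct

universe v

/-- Natural `K`-linear transformations from a functor of modules `F` to the identity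
functor `𝒦 : S ↦ S`. -/
def KHom (K : Type) [CommRing K] (F : ModuleFunctor.{0} K) :=
  {f : ∀ (S : Type) [CommRing S] [Algebra K S], F.obj S →ₗ[S] S //
    ∀ (S S' : Type) [CommRing S] [Algebra K S] [CommRing S'] [Algebra K S']
      (φ : S →ₐ[K] S') (x : F.obj S), f S' (F.map φ x) = φ (f S x)}

/-- Functionals on `N` separate points of `S ⊗[K] N` when `K` is a field. -/
theorem sep_lemma (K : Type) [Field K] (S : Type) [CommRing S] [Algebra K S]
    (N : Type) [AddCommGroup N] [Module K N] (t : S ⊗[K] N)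
    (h : ∀ l : N →ₗ[K] K, LinearMap.lTensor S l t = 0) : t = 0 := by
  classical
  let b := Module.Basis.ofVectorSpace K N
  have key : ∀ (i : Module.Basis.ofVectorSpaceIndex K N) (w : S ⊗[K] N),
      (b.baseChange S).repr w i =
        (TensorProduct.AlgebraTensorModule.rid K S S)
          (LinearMap.lTensor S (b.coord i) w) := by
    intro i w
    induction w with
    | zero => simp
    | add a c ha hc => simp [ha, hc]
    | tmul x y =>
      simp [Module.Basis.baseChange_repr_tmul, TensorProduct.AlgebraTensorModule.rid_tmul,
        Module.Basis.coord_apply]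
  have hrepr : (b.baseChange S).repr t = 0 := by
    ext i
    rw [key i t, h (b.coord i)]
    simp
  exact (b.baseChange S).repr.map_eq_zero_iff.mp hrepr

/-- Over a field `K`, a functor of `𝒦`-modules `𝕄` is D-proquasi-coherent
(i.e. `Hom_𝒦(𝕄, 𝒩) → Hom_K(𝕄(K), N)` is injective for every `K`-vector space `N`) if
and only if the natural map `𝕄*(K) → Hom_K(𝕄(K), K)`, `w ↦ w_K`, is injective. -/
theorem statement9 (K : Type) [Field K] (F : ModuleFunctor.{0} K) :
    (∀ (N : Type) [AddCommGroup N] [Module K N],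
        Function.Injective (fun f : QCHom K F N => f.1 K)) ↔
    Function.Injective (fun f : KHom K F => f.1 K) := by
  constructor
  · -- forward: apply hypothesis with N = K, via the iso S ⊗[K] K ≃ S
    intro h kf kg hK
    -- turn a KHom into a QCHom K F K
    let toQC : KHom K F → QCHom K F K := fun f =>
      ⟨fun S _ _ =>
        (TensorProduct.AlgebraTensorModule.rid K S S).symm.toLinearMap ∘ₗ f.1 S, by
        intro S S' _ _ _ _ φ x
        simp only [LinearMap.comp_apply, LinearEquiv.coe_coe,
          TensorProduct.AlgebraTensorModule.rid_symm_apply, f.2 S S' φ x,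
          LinearMap.rTensor_tmul, AlgHom.toLinearMap_apply, map_one]⟩
    have hq : toQC kf = toQC kg := by
      apply h K
      show (toQC kf).1 K = (toQC kg).1 K
      simp only [toQC]
      rw [show kf.1 K = kg.1 K from hK]
    apply Subtype.ext
    funext S instS instA
    have hS : (toQC kf).1 S = (toQC kg).1 S := by rw [hq]
    ext x
    have := congrArg (fun (l : F.obj S →ₗ[S] S ⊗[K] K) =>
      (TensorProduct.AlgebraTensorModule.rid K S S) (l x)) hS
    simpa [toQC] using this
  · -- backward
    intro h N _ _ f g hK
    have hK' : f.1 K = g.1 K := hK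
    apply Subtype.ext
    funext S instS instA
    ext x
    have key : ∀ l : N →ₗ[K] K,
        LinearMap.lTensor S l (f.1 S x - g.1 S x) = 0 := by
      intro l
      -- build KHoms from f, g composed with l
      let toK : QCHom K F N → KHom K F := fun w =>
        ⟨fun T _ _ =>
          (TensorProduct.AlgebraTensorModule.rid K T T).toLinearMap ∘ₗ
            (l.baseChange T ∘ₗ w.1 T), by
          intro T T' _ _ _ _ φ y
          simp only [LinearMap.comp_apply, LinearEquiv.coe_coe, w.2 T T' φ y]
          induction w.1 T y with
          | zero => simp
          | add a b ha hb =>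
            simp only [map_add, ha, hb]
          | tmul s n =>
            simp only [LinearMap.rTensor_tmul, AlgHom.toLinearMap_apply,
              LinearMap.baseChange_tmul, TensorProduct.AlgebraTensorModule.rid_tmul]
            rw [Algebra.smul_def, Algebra.smul_def, map_mul, AlgHom.commutes]⟩
      have hkk : toK f = toK g := by
        apply h
        show (toK f).1 K = (toK g).1 K
        simp only [toK]
        rw [hK']
      have hT : (toK f).1 S = (toK g).1 S := by rw [hkk]
      have := congrArg (fun (m : F.obj S →ₗ[S] S) => m x) hT
      simp only [toK, LinearMap.comp_apply, LinearEquiv.coe_coe] at this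
      have h2 : l.baseChange S (f.1 S x) = l.baseChange S (g.1 S x) :=
        (TensorProduct.AlgebraTensorModule.rid K S S).injective this
      rw [map_sub, ← LinearMap.baseChange_eq_ltensor, h2, sub_self]
    have := sep_lemma K S N (f.1 S x - g.1 S x) key
    exact sub_eq_zero.mp this
end

section
/- A functor of modules 𝕄 over a field K is D-proquasi-coherent if and only if for every K-vector space N and every natural K-linear transformation f : 𝕄 → 𝒩, the cokernel of f (computed objectwise) is the quasi-coherent module associated with coker(f_K); equivalently, the image of f is the quasi-coherent module associated with im(f_K). -/
open TensorProduct

universe v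

section Aux
variable {K : Type} [Field K]

lemma aux_lid_baseChange {N P : Type} [AddCommGroup N] [Module K N] [AddCommGroup P]
    [Module K P] (π : N →ₗ[K] P) (y : K ⊗[K] N) :
    TensorProduct.lid K P (LinearMap.baseChange K π y) = π (TensorProduct.lid K N y) := by
  induction y using TensorProduct.induction_on with
  | zero => simp
  | tmul k n => simp
  | add a b ha hb => simp [ha, hb]

lemma aux_rTensor_ofId {N : Type} [AddCommGroup N] [Module K N]
    (S : Type) [CommRing S] [Algebra K S] (y : K ⊗[K] N) :
    LinearMap.rTensor N (Algebra.ofId K S).toLinearMap y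
      = 1 ⊗ₜ[K] (TensorProduct.lid K N y) := by
  induction y using TensorProduct.induction_on with
  | zero => simp
  | tmul k n =>
      simp only [LinearMap.rTensor_tmul, TensorProduct.lid_tmul, AlgHom.toLinearMap_apply,
        Algebra.ofId_apply, Algebra.algebraMap_eq_smul_one]
      rw [TensorProduct.smul_tmul]
  | add a b ha hb => simp [ha, hb, TensorProduct.tmul_add]

lemma aux_baseChange_rTensor {N P : Type} [AddCommGroup N] [Module K N] [AddCommGroup P]
    [Module K P] (π : N →ₗ[K] P) {S S' : Type} [CommRing S] [Algebra K S] [CommRing S']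
    [Algebra K S'] (φ : S →ₐ[K] S') (y : S ⊗[K] N) :
    LinearMap.baseChange S' π (LinearMap.rTensor N φ.toLinearMap y)
      = LinearMap.rTensor P φ.toLinearMap (LinearMap.baseChange S π y) := by
  induction y using TensorProduct.induction_on with
  | zero => simp
  | tmul s n => simp
  | add a b ha hb => simp [ha, hb]

end Aux

/-- Over a field `K`, a functor of modules `𝕄` is D-proquasi-coherent if
and only if for every `K`-vector space `N` and every natural transformation
`f : 𝕄 → 𝒩`, the image of `f` (objectwise) is the quasi-coherent module associated
with `im f_K`: for every algebra `S`, the range of `f_S` equals the image of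
`S ⊗_K (im f_K)` in `S ⊗_K N` (equivalently, the objectwise cokernel of `f` is the
quasi-coherent module associated with `coker f_K`). -/


theorem statement10 (K : Type) [Field K] (F : ModuleFunctor.{0} K) :
    (∀ (N : Type) [AddCommGroup N] [Module K N],
        Function.Injective (fun f : QCHom K F N => f.1 K)) ↔
    (∀ (N : Type) [AddCommGroup N] [Module K N] (f : QCHom K F N)
        (S : Type) [CommRing S] [Algebra K S],
        LinearMap.range (f.1 S)
          = LinearMap.range
              (LinearMap.baseChange S
                (LinearMap.range
                  ((TensorProduct.lid K N).toLinearMap ∘ₗ f.1 K)).subtype)) := by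
  constructor
  · intro hinj N _ _ f S _ _
    set V : Submodule K N :=
      LinearMap.range ((TensorProduct.lid K N).toLinearMap ∘ₗ f.1 K) with hVdef
    apply le_antisymm
    · -- range f_S ≤ range (baseChange S V.subtype)
      -- the natural transformation g = (quotient by V) ∘ f
      let g : QCHom K F (N ⧸ V) :=
        ⟨fun S' _ _ => (V.mkQ.baseChange S') ∘ₗ f.1 S', by
          intro A B _ _ _ _ φ x
          simp only [LinearMap.comp_apply]
          rw [f.2 A B φ x, aux_baseChange_rTensor]⟩
      let z : QCHom K F (N ⧸ V) :=
        ⟨fun S' _ _ => 0, by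
          intro A B _ _ _ _ φ x; simp⟩
      have hgz : g = z := by
        apply hinj (N ⧸ V)
        show g.1 K = z.1 K
        apply LinearMap.ext
        intro x
        have hmem : TensorProduct.lid K N (f.1 K x) ∈ V :=
          ⟨x, by simp [LinearMap.comp_apply]⟩
        have h0 : TensorProduct.lid K (N ⧸ V) ((V.mkQ.baseChange K) (f.1 K x)) = 0 := by
          rw [aux_lid_baseChange]
          simpa using (Submodule.Quotient.mk_eq_zero V).mpr hmem
        have : (V.mkQ.baseChange K) (f.1 K x) = 0 :=
          (map_eq_zero_iff _ (TensorProduct.lid K (N ⧸ V)).injective).mp h0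
        simpa [g, z] using this
      rintro y ⟨x, rfl⟩
      have hzero : (V.mkQ.baseChange S) (f.1 S x) = 0 := by
        have := congrArg (fun q => q.1 S x) hgz
        simpa [g, z] using this
      have hker : (V.mkQ.lTensor S) (f.1 S x) = 0 := by
        rw [← LinearMap.baseChange_eq_ltensor]; exact hzero
      have hexact : Function.Exact (V.subtype.lTensor S) (V.mkQ.lTensor S) :=
        lTensor_exact S (LinearMap.exact_subtype_mkQ V) (Submodule.mkQ_surjective V)
      obtain ⟨t, ht⟩ := (hexact _).mp hker
      exact ⟨t, by rw [LinearMap.baseChange_eq_ltensor]; exact ht⟩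
    · -- range (baseChange S V.subtype) ≤ range f_S
      rintro y ⟨t, rfl⟩
      induction t using TensorProduct.induction_on with
      | zero => simp only [map_zero]; exact zero_mem _
      | tmul s v =>
          obtain ⟨x, hx⟩ := v.2
          have hnat := f.2 K S (Algebra.ofId K S) x
          rw [aux_rTensor_ofId] at hnat
          have h1 : (1 : S) ⊗ₜ[K] (v : N) ∈ LinearMap.range (f.1 S) := by
            refine ⟨F.map (Algebra.ofId K S) x, ?_⟩
            rw [hnat]
            exact congrArg (fun n => (1:S) ⊗ₜ[K] n) hx
          have : LinearMap.baseChange S V.subtype (s ⊗ₜ[K] v) = s • ((1 : S) ⊗ₜ[K] (v : N)) := by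
            simp [TensorProduct.smul_tmul']
          rw [this]
          exact Submodule.smul_mem _ s h1
      | add a b ha hb =>
          rw [map_add]; exact add_mem ha hb
  · intro hr N _ _ f g hfg
    have hfgK : f.1 K = g.1 K := hfg
    -- the difference natural transformation
    let h : QCHom K F N :=
      ⟨fun S' _ _ => f.1 S' - g.1 S', by
        intro A B _ _ _ _ φ x
        simp [LinearMap.sub_apply, f.2 A B φ x, g.2 A B φ x]⟩
    have hK0 : ∀ x, h.1 K x = 0 := by
      intro x
      simp [h, LinearMap.sub_apply, hfgK, sub_eq_zero]
    apply Subtype.ext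
    funext S _ _
    apply LinearMap.ext
    intro x
    have hrange := hr N h S
    have hbot : LinearMap.range
        (LinearMap.baseChange S
          (LinearMap.range ((TensorProduct.lid K N).toLinearMap ∘ₗ h.1 K)).subtype) = ⊥ := by
      rw [eq_bot_iff]
      rintro y ⟨t, rfl⟩
      induction t using TensorProduct.induction_on with
      | zero => simp
      | tmul s w =>
          have hw : (w : N) = 0 := by
            obtain ⟨x', hx'⟩ := w.2
            rw [← hx']
            simp [LinearMap.comp_apply, hK0 x']
          simp [Submodule.mem_bot, hw]
      | add a b ha hb =>
          rw [map_add]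
          exact add_mem ha hb
    rw [hbot] at hrange
    have : h.1 S x = 0 := by
      have : h.1 S x ∈ LinearMap.range (h.1 S) := ⟨x, rfl⟩
      rw [hrange] at this
      simpa using this
    have := this
    simpa [h, LinearMap.sub_apply, sub_eq_zero] using this
end

section
/- Let M be a free R-module, M = ⊕_I R. Then the module scheme ℳ* (S ↦ Hom_R(M,S) ≅ ∏_I S) is D-proquasi-coherent: the natural map from natural linear transformations ℳ* → 𝒩 to R-linear maps ℳ*(R) → N is injective for every R-module N. -/
open TensorProduct

section Aux

variable (R : Type) [CommRing R] (I : Type) (N : Type) [AddCommGroup N] [Module R N]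

open MvPolynomial

open scoped Classical in
noncomputable def stmt15π (J : Finset I) : MvPolynomial I R →ₐ[R] MvPolynomial I R :=
  aeval (fun i => if i ∈ (J : Set I) then X i else 0)

lemma stmt15π_comp {J J' : Finset I} (h : J ⊆ J') :
    (stmt15π R I J').comp (stmt15π R I J) = stmt15π R I J := by
  classical
  apply MvPolynomial.algHom_ext
  intro i
  simp only [AlgHom.comp_apply, stmt15π, aeval_X]
  by_cases hi : i ∈ (J : Set I)
  · have hi' : i ∈ J' := h (Finset.mem_coe.mp hi)
    simp [hi, hi']
  · simp [hi]

lemma stmt15_finsupp (t : MvPolynomial I R ⊗[R] N) :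
    ∃ J : Finset I, ∀ J' : Finset I, J ⊆ J' →
      LinearMap.rTensor N (stmt15π R I J').toLinearMap t = t := by
  classical
  have key : ∀ (J J' : Finset I), J ⊆ J' → ∀ t : MvPolynomial I R ⊗[R] N,
      LinearMap.rTensor N (stmt15π R I J).toLinearMap t = t →
      LinearMap.rTensor N (stmt15π R I J').toLinearMap t = t := by
    intro J J' hJJ' t ht
    conv_lhs => rw [← ht]
    rw [← LinearMap.comp_apply, ← LinearMap.rTensor_comp]
    have : (stmt15π R I J').toLinearMap ∘ₗ (stmt15π R I J).toLinearMap
        = (stmt15π R I J).toLinearMap := by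
      rw [← AlgHom.comp_toLinearMap, stmt15π_comp R I hJJ']
    rw [this, ht]
  induction t using TensorProduct.induction_on with
  | zero => exact ⟨∅, fun J' _ => by simp⟩
  | tmul a n =>
      refine ⟨a.vars, fun J' hJ' => ?_⟩
      classical
      simp only [LinearMap.rTensor_tmul, AlgHom.toLinearMap_apply, stmt15π]
      rw [aeval_ite_mem_eq_self a (show (a.vars : Set I) ⊆ (J' : Set I) by exact_mod_cast hJ')]
  | add x y hx hy =>
      obtain ⟨J₁, h₁⟩ := hx
      obtain ⟨J₂, h₂⟩ := hy
      refine ⟨J₁ ∪ J₂, fun J' hJ' => ?_⟩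
      rw [map_add, h₁ J' (Finset.union_subset_left hJ'),
        h₂ J' (Finset.union_subset_right hJ')]

end Aux

/-- For a free `R`-module `M = ⊕_I R`, the module scheme
`ℳ* : S ↦ Hom_R(M, S) ≅ ∏_I S` is D-proquasi-coherent: for every `R`-module `N`, a
natural `R`-linear transformation `ℳ* → 𝒩` (where `𝒩(S) = S ⊗_R N`) is determined by
its component at `R`. -/
theorem statement15 (R : Type) [CommRing R] (I : Type)
    (N : Type) [AddCommGroup N] [Module R N] :
    Function.Injective
      (fun f : {f : ∀ (S : Type) [CommRing S] [Algebra R S], (I → S) →ₗ[S] S ⊗[R] N //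
          ∀ (S S' : Type) [CommRing S] [Algebra R S] [CommRing S'] [Algebra R S']
            (φ : S →ₐ[R] S') (v : I → S),
            f S' (fun i => φ (v i)) = LinearMap.rTensor N φ.toLinearMap (f S v)} =>
        f.1 R) := by
  classical
  rintro ⟨f, hf⟩ ⟨g, hg⟩ h
  simp only at h
  set A := MvPolynomial I R
  -- Key: f A X = g A X
  have key : f A MvPolynomial.X = g A MvPolynomial.X := by
    obtain ⟨J₁, h₁⟩ := stmt15_finsupp R I N (f A MvPolynomial.X)
    obtain ⟨J₂, h₂⟩ := stmt15_finsupp R I N (g A MvPolynomial.X)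
    set J : Finset I := J₁ ∪ J₂ with hJ
    have hw : ∀ (F : ∀ (S : Type) [CommRing S] [Algebra R S], (I → S) →ₗ[S] S ⊗[R] N),
        (∀ (S S' : Type) [CommRing S] [Algebra R S] [CommRing S'] [Algebra R S']
            (φ : S →ₐ[R] S') (v : I → S),
            F S' (fun i => φ (v i)) = LinearMap.rTensor N φ.toLinearMap (F S v)) →
        LinearMap.rTensor N (stmt15π R I J).toLinearMap (F A MvPolynomial.X)
          = ∑ i ∈ J, (MvPolynomial.X i : A) •
              LinearMap.rTensor N (Algebra.ofId R A).toLinearMap (F R (Pi.single i 1)) := by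
      intro F hF
      rw [← hF A A (stmt15π R I J) MvPolynomial.X]
      have hXw : (fun i => stmt15π R I J (MvPolynomial.X i))
          = ∑ i ∈ J, MvPolynomial.X (R := R) i •
              (fun j => algebraMap R A ((Pi.single i (1 : R) : I → R) j)) := by
        funext j
        simp only [stmt15π, MvPolynomial.aeval_X, Finset.sum_apply, Pi.smul_apply,
          Pi.single_apply, smul_eq_mul]
        rw [Finset.sum_congr rfl (fun i _ => ?_)]
        · rw [Finset.sum_ite_eq J j (fun i => MvPolynomial.X i)]
          simp
        · by_cases hji : j = i <;> simp [hji]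
      rw [hXw, map_sum]
      refine Finset.sum_congr rfl fun i _ => ?_
      rw [map_smul]
      congr 1
      exact hF R A (Algebra.ofId R A) (Pi.single i 1)
    have hFf := hw f hf
    have hFg := hw g hg
    rw [h] at hFf
    rw [← h₁ J (Finset.union_subset_left (Finset.Subset.refl J)), ← h₂ J (Finset.union_subset_right (Finset.Subset.refl J)), hFf, hFg]
  -- Now conclude for all S via Yoneda
  apply Subtype.ext
  simp only
  funext S
  funext instS
  funext instAS
  apply LinearMap.ext
  intro v
  have hv : (fun i => (MvPolynomial.aeval v : A →ₐ[R] S) (MvPolynomial.X i)) = v := by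
    funext i; simp
  have e1 := hf A S (MvPolynomial.aeval v) MvPolynomial.X
  have e2 := hg A S (MvPolynomial.aeval v) MvPolynomial.X
  rw [hv] at e1 e2
  rw [e1, e2, key]
end

section
/- Let R be a commutative ring and M an R-module. Then the functor of R-linear natural transformations from the functor S ↦ ∏_I S to the functor S ↦ M ⊗_R S is the direct sum ⊕_I ℳ: that is, ℋom_𝒦(∏_I 𝒦, ℳ)(S) ≅ ⊕_I (M ⊗_R S) naturally in S. In particular every natural linear transformation ∏_I 𝒦 → ℳ factors through a finite subproduct. -/
open TensorProduct

namespace MvPolynomial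

variable {R : Type} [CommRing R] {N : Type} [AddCommGroup N] [Module R N]
  {σ : Type} {S : Type} [CommRing S] [Algebra R S] [DecidableEq σ]

noncomputable def rTensor :
    MvPolynomial σ S ⊗[R] N ≃ₗ[S] (σ →₀ ℕ) →₀ (S ⊗[R] N) :=
  TensorProduct.AlgebraTensorModule.congr (AddMonoidAlgebra.coeffLinearEquiv S)
    (LinearEquiv.refl R N) ≪≫ₗ TensorProduct.finsuppLeft R S S N (σ →₀ ℕ)

lemma rTensor_apply_tmul_apply (p : MvPolynomial σ S) (n : N) (d : σ →₀ ℕ) :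
    rTensor (p ⊗ₜ[R] n) d = (coeff d p) ⊗ₜ[R] n :=
  by
  simp only [rTensor, LinearEquiv.trans_apply, TensorProduct.AlgebraTensorModule.congr_tmul,
    LinearEquiv.refl_apply, TensorProduct.finsuppLeft_apply_tmul_apply,
    AddMonoidAlgebra.coeffLinearEquiv_apply]
  rfl

lemma rTensor_apply_monomial_tmul (e : σ →₀ ℕ) (s : S) (n : N) :
    rTensor (monomial e s ⊗ₜ[R] n) = Finsupp.single e (s ⊗ₜ[R] n) := by
  ext d
  rw [rTensor_apply_tmul_apply, coeff_monomial, Finsupp.single_apply]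
  split <;> simp

end MvPolynomial

namespace Statement16Aux

variable {R : Type} [CommRing R] {M : Type} [AddCommGroup M] [Module R M]
  {I : Type} {S : Type} [CommRing S] [Algebra R S]

lemma deg_one (d : I →₀ ℕ) (hd : (d.sum fun _ n => n) = 1) :
    ∃ i, d = Finsupp.single i 1 := by
  classical
  have hs : d.support.Nonempty := by
    rcases Finset.eq_empty_or_nonempty d.support with h | h
    · exfalso
      rw [Finsupp.support_eq_empty] at h
      subst h
      simp [Finsupp.sum] at hd
    · exact h
  obtain ⟨i, hi⟩ := hs
  rw [Finsupp.sum] at hd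
  have hdi : 1 ≤ d i := Nat.one_le_iff_ne_zero.mpr (Finsupp.mem_support_iff.mp hi)
  have hle : d i ≤ ∑ x ∈ d.support, d x :=
    Finset.single_le_sum (fun _ _ => Nat.zero_le _) hi
  refine ⟨i, ?_⟩
  rw [Finsupp.eq_single_iff]
  constructor
  · intro j hj
    simp only [Finset.mem_singleton]
    by_contra hji
    have hdj : 1 ≤ d j := Nat.one_le_iff_ne_zero.mpr (Finsupp.mem_support_iff.mp hj)
    have hsub : ({i, j} : Finset I) ⊆ d.support := by
      intro k hk
      simp only [Finset.mem_insert, Finset.mem_singleton] at hk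
      rcases hk with rfl | rfl <;> assumption
    have hmono := Finset.sum_le_sum_of_subset (f := fun k => d k) hsub
    rw [Finset.sum_pair (fun h => hji h.symm)] at hmono
    omega
  · omega

variable [DecidableEq I]

lemma emb_inj {k k' : ℕ} {ν ν' : I →₀ ℕ}
    (h : Finsupp.single (none : Option I) k + ν.mapDomain some
       = Finsupp.single none k' + ν'.mapDomain some) : k = k' ∧ ν = ν' := by
  have hnone : (none : Option I) ∉ Set.range (some : I → Option I) := by
    rintro ⟨x, hx⟩; cases hx
  constructor
  · have := DFunLike.congr_fun h none
    simpa [Finsupp.mapDomain_notin_range _ _ hnone] using this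
  · ext i
    have := DFunLike.congr_fun h (some i)
    simpa [Finsupp.single_apply, Finsupp.mapDomain_apply (Option.some_injective I)] using this

lemma psi_monomial (ν : I →₀ ℕ) (s : S) :
    MvPolynomial.aeval (R := S)
        (fun i => MvPolynomial.X (none : Option I) * MvPolynomial.X (some i))
        (MvPolynomial.monomial ν s)
      = MvPolynomial.monomial
          (Finsupp.single none (ν.sum fun _ n => n) + ν.mapDomain some) s := by
  rw [MvPolynomial.aeval_monomial]
  have h1 : (ν.prod fun i k =>
        ((MvPolynomial.X (none : Option I) : MvPolynomial (Option I) S)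
          * MvPolynomial.X (some i)) ^ k)
      = (MvPolynomial.X (none : Option I) : MvPolynomial (Option I) S)
          ^ (ν.sum fun _ n => n)
        * ν.prod fun i k => (MvPolynomial.X (some i) : MvPolynomial (Option I) S) ^ k := by
    simp only [Finsupp.prod, Finsupp.sum, mul_pow, Finset.prod_mul_distrib,
      Finset.prod_pow_eq_pow_sum]
  have h2 : (ν.prod fun i k => (MvPolynomial.X (some i) : MvPolynomial (Option I) S) ^ k)
      = MvPolynomial.monomial (ν.mapDomain some) (1 : S) := by
    rw [MvPolynomial.monomial_eq, map_one, one_mul,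
      Finsupp.prod_mapDomain_index_inj
        (h := fun n e => (MvPolynomial.X n : MvPolynomial (Option I) S) ^ e)
        (Option.some_injective I)]
  rw [h1, h2]
  have h3 : (algebraMap S (MvPolynomial (Option I) S)) s = MvPolynomial.C s := rfl
  rw [h3, ← mul_assoc, MvPolynomial.C_mul_X_pow_eq_monomial, MvPolynomial.monomial_mul, mul_one]

lemma iota_monomial (ν : I →₀ ℕ) (s : S) :
    MvPolynomial.aeval (R := S)
        (fun i => (MvPolynomial.X (some i) : MvPolynomial (Option I) S))
        (MvPolynomial.monomial ν s)
      = MvPolynomial.monomial (ν.mapDomain some) s := by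
  rw [MvPolynomial.aeval_monomial]
  have h2 : (ν.prod fun i k => (MvPolynomial.X (some i) : MvPolynomial (Option I) S) ^ k)
      = MvPolynomial.monomial (ν.mapDomain some) (1 : S) := by
    rw [MvPolynomial.monomial_eq, map_one, one_mul,
      Finsupp.prod_mapDomain_index_inj
        (h := fun n e => (MvPolynomial.X n : MvPolynomial (Option I) S) ^ e)
        (Option.some_injective I)]
  have h3 : (algebraMap S (MvPolynomial (Option I) S)) s = MvPolynomial.C s := rfl
  rw [h2, h3, MvPolynomial.C_mul_monomial, mul_one]

lemma coeff_psi (μ : I →₀ ℕ) (p : MvPolynomial I S) :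
    MvPolynomial.coeff (Finsupp.single none (μ.sum fun _ n => n) + μ.mapDomain some)
      (MvPolynomial.aeval (R := S)
        (fun i => MvPolynomial.X (none : Option I) * MvPolynomial.X (some i)) p)
    = MvPolynomial.coeff μ p := by
  induction p using MvPolynomial.induction_on' with
  | monomial ν s =>
    rw [psi_monomial, MvPolynomial.coeff_monomial, MvPolynomial.coeff_monomial]
    by_cases h : ν = μ
    · subst h; simp
    · rw [if_neg h, if_neg fun hc => h (emb_inj hc).2]
  | add p q hp hq =>
    rw [map_add, MvPolynomial.coeff_add, MvPolynomial.coeff_add, hp, hq]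

lemma coeff_iota (μ : I →₀ ℕ) (p : MvPolynomial I S) :
    MvPolynomial.coeff (Finsupp.single none (μ.sum fun _ n => n) + μ.mapDomain some)
      (MvPolynomial.X (none : Option I)
        * MvPolynomial.aeval (R := S)
            (fun i => (MvPolynomial.X (some i) : MvPolynomial (Option I) S)) p)
    = if (μ.sum fun _ n => n) = 1 then MvPolynomial.coeff μ p else 0 := by
  induction p using MvPolynomial.induction_on' with
  | monomial ν s =>
    rw [iota_monomial]
    have hX : (MvPolynomial.X (none : Option I) : MvPolynomial (Option I) S)
        * MvPolynomial.monomial (ν.mapDomain some) s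
        = MvPolynomial.monomial (Finsupp.single none 1 + ν.mapDomain some) s := by
      rw [MvPolynomial.X, MvPolynomial.monomial_mul, one_mul]
    rw [hX, MvPolynomial.coeff_monomial, MvPolynomial.coeff_monomial]
    by_cases hk : (μ.sum fun _ n => n) = 1
    · rw [if_pos hk]
      by_cases hν : ν = μ
      · subst hν; rw [hk, if_pos rfl, if_pos rfl]
      · rw [if_neg hν, if_neg fun hc => hν (emb_inj hc).2]
    · rw [if_neg hk, if_neg fun hc => hk (emb_inj hc).1.symm]
  | add p q hp hq =>
    rw [map_add, mul_add, MvPolynomial.coeff_add, MvPolynomial.coeff_add, hp, hq]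
    split <;> simp

lemma rT_psi (x : MvPolynomial I S ⊗[R] M) (μ : I →₀ ℕ) :
    MvPolynomial.rTensor
      (LinearMap.rTensor M
        (AlgHom.restrictScalars R (MvPolynomial.aeval (R := S)
          (fun i => (MvPolynomial.X (none : Option I) : MvPolynomial (Option I) S)
            * MvPolynomial.X (some i)))).toLinearMap x)
      (Finsupp.single none (μ.sum fun _ n => n) + μ.mapDomain some)
    = MvPolynomial.rTensor x μ := by
  induction x using TensorProduct.induction_on with
  | zero => simp
  | tmul p m =>
    rw [LinearMap.rTensor_tmul, MvPolynomial.rTensor_apply_tmul_apply,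
      MvPolynomial.rTensor_apply_tmul_apply]
    have hres : (AlgHom.restrictScalars R (MvPolynomial.aeval (R := S)
        (fun i => (MvPolynomial.X (none : Option I) : MvPolynomial (Option I) S)
          * MvPolynomial.X (some i)))).toLinearMap p
        = MvPolynomial.aeval (R := S)
          (fun i => (MvPolynomial.X (none : Option I) : MvPolynomial (Option I) S)
            * MvPolynomial.X (some i)) p := rfl
    rw [hres, coeff_psi]
  | add y z hy hz => simp only [map_add, Finsupp.add_apply, hy, hz]

lemma rT_iota (x : MvPolynomial I S ⊗[R] M) (μ : I →₀ ℕ) :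
    MvPolynomial.rTensor
      ((MvPolynomial.X (none : Option I) : MvPolynomial (Option I) S) •
        LinearMap.rTensor M
          (AlgHom.restrictScalars R (MvPolynomial.aeval (R := S)
            (fun i => (MvPolynomial.X (some i) : MvPolynomial (Option I) S)))).toLinearMap x)
      (Finsupp.single none (μ.sum fun _ n => n) + μ.mapDomain some)
    = if (μ.sum fun _ n => n) = 1 then MvPolynomial.rTensor x μ else 0 := by
  induction x using TensorProduct.induction_on with
  | zero => simp
  | tmul p m =>
    rw [LinearMap.rTensor_tmul, TensorProduct.smul_tmul', smul_eq_mul,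
      MvPolynomial.rTensor_apply_tmul_apply, MvPolynomial.rTensor_apply_tmul_apply]
    have hres : (AlgHom.restrictScalars R (MvPolynomial.aeval (R := S)
        (fun i => (MvPolynomial.X (some i) : MvPolynomial (Option I) S)))).toLinearMap p
        = MvPolynomial.aeval (R := S)
          (fun i => (MvPolynomial.X (some i) : MvPolynomial (Option I) S)) p := rfl
    rw [hres, coeff_iota, ite_tmul]
  | add y z hy hz =>
    simp only [smul_add, map_add, Finsupp.add_apply, hy, hz]
    split <;> simp

lemma rT_smul_X (i : I) (d : I →₀ ℕ) (x : S ⊗[R] M) :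
    MvPolynomial.rTensor
      ((MvPolynomial.X i : MvPolynomial I S) •
        LinearMap.rTensor M
          (IsScalarTower.toAlgHom R S (MvPolynomial I S)).toLinearMap x) d
      = if Finsupp.single i 1 = d then x else 0 := by
  induction x using TensorProduct.induction_on with
  | zero => simp
  | tmul s m =>
    have h1 : (IsScalarTower.toAlgHom R S (MvPolynomial I S)).toLinearMap s
        = MvPolynomial.C s := rfl
    rw [LinearMap.rTensor_tmul, h1, TensorProduct.smul_tmul', smul_eq_mul,
      mul_comm, MvPolynomial.C_mul_X_eq_monomial, MvPolynomial.rTensor_apply_monomial_tmul,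
      Finsupp.single_apply]
  | add y z hy hz =>
    simp only [smul_add, map_add, Finsupp.add_apply, hy, hz]
    split <;> simp

lemma rT_sum_apply (b : I →₀ S ⊗[R] M) (d : I →₀ ℕ) :
    MvPolynomial.rTensor (b.sum fun i x =>
      (MvPolynomial.X i : MvPolynomial I S) •
        LinearMap.rTensor M (IsScalarTower.toAlgHom R S (MvPolynomial I S)).toLinearMap x) d
    = ∑ i ∈ b.support, if Finsupp.single i 1 = d then b i else 0 := by
  rw [Finsupp.sum, map_sum, Finsupp.finset_sum_apply]
  exact Finset.sum_congr rfl fun i _ => rT_smul_X i d (b i)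

lemma rT_sum_single (b : I →₀ S ⊗[R] M) (j : I) :
    MvPolynomial.rTensor (b.sum fun i x =>
      (MvPolynomial.X i : MvPolynomial I S) •
        LinearMap.rTensor M (IsScalarTower.toAlgHom R S (MvPolynomial I S)).toLinearMap x)
      (Finsupp.single j 1)
    = b j := by
  rw [rT_sum_apply]
  have h : ∀ i ∈ b.support,
      (if Finsupp.single i (1:ℕ) = Finsupp.single j 1 then b i else 0)
      = if i = j then b i else 0 := by
    intro i _
    simp only [Finsupp.single_left_inj (one_ne_zero (α := ℕ))]
  rw [Finset.sum_congr rfl h, Finset.sum_ite_eq' b.support j (fun i => b i)]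
  by_cases hj : j ∈ b.support
  · rw [if_pos hj]
  · rw [if_neg hj]
    exact (Finsupp.notMem_support_iff.mp hj).symm

lemma rT_aeval (T : Type) [CommRing T] [Algebra R T] [Algebra S T] [IsScalarTower R S T]
    (v : I → T) (i : I) (x : S ⊗[R] M) :
    LinearMap.rTensor M
      (AlgHom.restrictScalars R (MvPolynomial.aeval (R := S) v)).toLinearMap
      ((MvPolynomial.X i : MvPolynomial I S) •
        LinearMap.rTensor M (IsScalarTower.toAlgHom R S (MvPolynomial I S)).toLinearMap x)
    = v i • LinearMap.rTensor M (IsScalarTower.toAlgHom R S T).toLinearMap x := by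
  induction x using TensorProduct.induction_on with
  | zero => simp
  | tmul s m =>
    have h1 : (IsScalarTower.toAlgHom R S (MvPolynomial I S)).toLinearMap s
        = MvPolynomial.C s := rfl
    rw [LinearMap.rTensor_tmul, h1, TensorProduct.smul_tmul', smul_eq_mul,
      LinearMap.rTensor_tmul, LinearMap.rTensor_tmul, TensorProduct.smul_tmul', smul_eq_mul]
    simp only [AlgHom.toLinearMap_apply, AlgHom.coe_restrictScalars', map_mul,
      MvPolynomial.aeval_X, MvPolynomial.aeval_C, IsScalarTower.coe_toAlgHom']
  | add y z hy hz => simp only [map_add, smul_add, hy, hz]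

end Statement16Aux

open Statement16Aux

theorem statement16 (R : Type) [CommRing R] (M : Type) [AddCommGroup M] [Module R M]
    (I : Type) (S : Type) [CommRing S] [Algebra R S]
    (f : {f : ∀ (T : Type) [CommRing T] [Algebra R T] [Algebra S T] [IsScalarTower R S T],
            (I → T) →ₗ[T] T ⊗[R] M //
          ∀ (T T' : Type) [CommRing T] [Algebra R T] [Algebra S T] [IsScalarTower R S T]
            [CommRing T'] [Algebra R T'] [Algebra S T'] [IsScalarTower R S T']
            (φ : T →ₐ[S] T') (v : I → T),
            f T' (fun i => φ (v i))
              = LinearMap.rTensor M (AlgHom.restrictScalars R φ).toLinearMap (f T v)}) :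
    (∃! a : I →₀ S ⊗[R] M,
        ∀ (T : Type) [CommRing T] [Algebra R T] [Algebra S T] [IsScalarTower R S T]
          (v : I → T),
          f.1 T v = a.sum fun i x =>
            v i • LinearMap.rTensor M (IsScalarTower.toAlgHom R S T).toLinearMap x) ∧
    (∃ J : Finset I,
        ∀ (T : Type) [CommRing T] [Algebra R T] [Algebra S T] [IsScalarTower R S T]
          (v v' : I → T), (∀ i ∈ J, v i = v' i) → f.1 T v = f.1 T v') := by
  classical
  -- naturality against the universal point
  have hnat : ∀ (T : Type) [CommRing T] [Algebra R T] [Algebra S T] [IsScalarTower R S T]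
      (v : I → T),
      f.1 T v = LinearMap.rTensor M
        (AlgHom.restrictScalars R (MvPolynomial.aeval (R := S) v)).toLinearMap
        (f.1 (MvPolynomial I S) MvPolynomial.X) := by
    intro T _ _ _ _ v
    have h := f.2 (MvPolynomial I S) T (MvPolynomial.aeval (R := S) v) MvPolynomial.X
    simpa using h
  -- homogeneity of degree 1
  have hhom : ∀ μ : I →₀ ℕ, (μ.sum fun _ n => n) ≠ 1 →
      MvPolynomial.rTensor (f.1 (MvPolynomial I S) MvPolynomial.X) μ = 0 := by
    intro μ hμ
    have h1 := f.2 (MvPolynomial I S) (MvPolynomial (Option I) S)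
      (MvPolynomial.aeval (R := S)
        (fun i => (MvPolynomial.X (none : Option I) : MvPolynomial (Option I) S)
          * MvPolynomial.X (some i)))
      MvPolynomial.X
    have h2 := f.2 (MvPolynomial I S) (MvPolynomial (Option I) S)
      (MvPolynomial.aeval (R := S)
        (fun i => (MvPolynomial.X (some i) : MvPolynomial (Option I) S)))
      MvPolynomial.X
    simp only [MvPolynomial.aeval_X] at h1 h2
    have h3 : (fun i => (MvPolynomial.X (none : Option I) : MvPolynomial (Option I) S)
          * MvPolynomial.X (some i))
        = (MvPolynomial.X (none : Option I) : MvPolynomial (Option I) S)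
          • fun i : I => (MvPolynomial.X (some i) : MvPolynomial (Option I) S) := by
      funext i
      simp [smul_eq_mul]
    have h5 : f.1 (MvPolynomial (Option I) S)
          (fun i => (MvPolynomial.X (none : Option I) : MvPolynomial (Option I) S)
            * MvPolynomial.X (some i))
        = (MvPolynomial.X (none : Option I) : MvPolynomial (Option I) S) •
            f.1 (MvPolynomial (Option I) S)
              (fun i : I => (MvPolynomial.X (some i) : MvPolynomial (Option I) S)) := by
      rw [h3, map_smul]
    rw [h5, h2] at h1
    have h4 := congrArg (fun y => MvPolynomial.rTensor y
      (Finsupp.single none (μ.sum fun _ n => n) + μ.mapDomain some)) h1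
    rw [rT_psi, rT_iota, if_neg hμ] at h4
    exact h4.symm
  -- the family a
  have hinj : Set.InjOn (fun i : I => Finsupp.single i (1 : ℕ))
      ((fun i : I => Finsupp.single i (1 : ℕ)) ⁻¹'
        ↑(MvPolynomial.rTensor (f.1 (MvPolynomial I S) MvPolynomial.X)).support) :=
    (Finsupp.single_left_injective (one_ne_zero (α := ℕ))).injOn
  set a : I →₀ S ⊗[R] M := Finsupp.comapDomain _
    (MvPolynomial.rTensor (f.1 (MvPolynomial I S) MvPolynomial.X)) hinj with ha_def
  have ha : ∀ i, a i
      = MvPolynomial.rTensor (f.1 (MvPolynomial I S) MvPolynomial.X) (Finsupp.single i 1) :=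
    fun i => rfl
  -- the decomposition of the universal element
  have hu : f.1 (MvPolynomial I S) MvPolynomial.X
      = a.sum fun i x => (MvPolynomial.X i : MvPolynomial I S) •
          LinearMap.rTensor M (IsScalarTower.toAlgHom R S (MvPolynomial I S)).toLinearMap x := by
    apply (MvPolynomial.rTensor (R := R) (S := S) (σ := I) (N := M)).injective
    ext d
    by_cases hd : (d.sum fun _ n => n) = 1
    · obtain ⟨i₀, rfl⟩ := deg_one d hd
      rw [rT_sum_single]
      exact (ha i₀).symm ▸ rfl
    · rw [hhom d hd, rT_sum_apply]
      symm
      apply Finset.sum_eq_zero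
      intro i _
      rw [if_neg]
      intro hc
      apply hd
      rw [← hc, Finsupp.sum_single_index rfl]
  -- the general formula
  have hform : ∀ (T : Type) [CommRing T] [Algebra R T] [Algebra S T] [IsScalarTower R S T]
      (v : I → T),
      f.1 T v = a.sum fun i x =>
        v i • LinearMap.rTensor M (IsScalarTower.toAlgHom R S T).toLinearMap x := by
    intro T _ _ _ _ v
    rw [hnat T v, hu, map_finsuppSum]
    exact Finsupp.sum_congr fun i _ => rT_aeval T v i (a i)
  refine ⟨⟨a, fun T _ _ _ _ v => hform T v, ?_⟩, ⟨a.support, ?_⟩⟩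
  · intro a' ha'
    have h' := ha' (MvPolynomial I S) MvPolynomial.X
    rw [hu] at h'
    ext j
    have hj := congrArg (fun y => MvPolynomial.rTensor y (Finsupp.single j 1)) h'
    rw [rT_sum_single, rT_sum_single] at hj
    exact hj.symm
  · intro T _ _ _ _ v v' hvv
    rw [hform T v, hform T v']
    exact Finsupp.sum_congr fun i hi => by rw [hvv i hi]
end

section
/- Let 𝕄 belong to the family 𝔉 (i.e., 𝕄 is a dual functor of R-modules admitting inclusions of ∏_J ℛ-modules ⊕_J ℛ ⊆ 𝕄 ⊆ ∏_J ℛ for some set J). If moreover 𝕄 is quasi-coherent, 𝕄 = ℳ for an R-module M, then M is a free R-module, M = ⊕_J R. -/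
open TensorProduct

/-- The ideal of finitely supported functions in a product ring. -/
def finSuppIdeal (R J : Type) [CommRing R] : Ideal (J → R) where
  carrier := {g | (Function.support g).Finite}
  add_mem' := fun ha hb => ((ha.union hb).subset (Function.support_add _ _))
  zero_mem' := by simp [Function.support_zero]
  smul_mem' := fun c g hg => hg.subset (Function.support_mul_subset_right c g)

set_option maxHeartbeats 1000000 in
set_option synthInstance.maxHeartbeats 400000 in
/-- If the quasi-coherent module `ℳ : S ↦ S ⊗_R M` belongs to the family
`𝔉`, i.e. it admits natural `∏_J ℛ`-linear inclusions `⊕_J ℛ ⊆ ℳ ⊆ ∏_J ℛ` (with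
composite the obvious inclusion and with image stable under the componentwise action
of `∏_J ℛ`), then `M` is a free `R`-module with basis indexed by `J`. -/
theorem statement18 (R : Type) [CommRing R] (J : Type) [DecidableEq J]
    (M : Type) [AddCommGroup M] [Module R M]
    (β : ∀ (S : Type) [CommRing S] [Algebra R S], (S ⊗[R] M) →ₗ[S] (J → S))
    (hβnat : ∀ (S S' : Type) [CommRing S] [Algebra R S] [CommRing S'] [Algebra R S']
      (φ : S →ₐ[R] S') (x : S ⊗[R] M),
      β S' (LinearMap.rTensor M φ.toLinearMap x) = fun j => φ (β S x j))
    (hβinj : ∀ (S : Type) [CommRing S] [Algebra R S], Function.Injective (β S))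
    (α : ∀ (S : Type) [CommRing S] [Algebra R S], (J →₀ S) →ₗ[S] (S ⊗[R] M))
    (hαnat : ∀ (S S' : Type) [CommRing S] [Algebra R S] [CommRing S'] [Algebra R S']
      (φ : S →ₐ[R] S') (v : J →₀ S),
      α S' (Finsupp.mapRange (⇑φ) (map_zero φ) v)
        = LinearMap.rTensor M φ.toLinearMap (α S v))
    (hαinj : ∀ (S : Type) [CommRing S] [Algebra R S], Function.Injective (α S))
    (hαβ : ∀ (S : Type) [CommRing S] [Algebra R S] (v : J →₀ S),
      β S (α S v) = fun j => v j)
    (hclosed : ∀ (S : Type) [CommRing S] [Algebra R S] (a : J → S) (x : S ⊗[R] M),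
      ∃ y : S ⊗[R] M, β S y = fun j => a j * β S x j) :
    Nonempty (Module.Basis J R M) := by
  -- It suffices to show `α R` is surjective.
  have hsurj : Function.Surjective (α R) := by
    intro x
    -- base change to the product ring `J → R`
    have hβx' : β (J → R) (LinearMap.rTensor M (Algebra.ofId R (J → R)).toLinearMap x)
        = fun j => algebraMap R (J → R) (β R x j) := by
      rw [hβnat R (J → R) (Algebra.ofId R (J → R)) x]
      rfl
    -- use the `∏`-module structure to get `ζ` with `β _ ζ j = Pi.single j (β R x j)`
    obtain ⟨ζ, hζ⟩ := hclosed (J → R) (fun j => Pi.single j 1)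
      (LinearMap.rTensor M (Algebra.ofId R (J → R)).toLinearMap x)
    have hβζ : β (J → R) ζ = fun j => Pi.single j (β R x j) := by
      rw [hζ, hβx']
      funext j k
      by_cases hk : k = j
      · subst hk
        simp [Pi.single_apply, Pi.algebraMap_apply]
      · simp [Pi.single_apply, hk, Pi.algebraMap_apply]
    -- pass to the quotient by the ideal of finitely supported functions
    have hζQ : LinearMap.rTensor M (Ideal.Quotient.mkₐ R (finSuppIdeal R J)).toLinearMap ζ
        = 0 := by
      apply hβinj ((J → R) ⧸ finSuppIdeal R J)
      rw [hβnat (J → R) ((J → R) ⧸ finSuppIdeal R J) (Ideal.Quotient.mkₐ R (finSuppIdeal R J)) ζ,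
        map_zero]
      funext j
      rw [hβζ]
      show Ideal.Quotient.mk (finSuppIdeal R J) (Pi.single j (β R x j)) = 0
      rw [Ideal.Quotient.eq_zero_iff_mem]
      show (Function.support (Pi.single j (β R x j))).Finite
      exact (Set.finite_singleton j).subset (Function.support_subset_iff.mpr
        (fun k hk => by
          by_contra hkj
          exact hk (Pi.single_eq_of_ne hkj _)))
    -- exactness: `ζ` comes from `I ⊗ M`
    have hexact : Function.Exact
        (⇑(Submodule.restrictScalars R (finSuppIdeal R J)).subtype)
        (⇑(Ideal.Quotient.mkₐ R (finSuppIdeal R J)).toLinearMap) := by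
      intro y
      constructor
      · intro hy
        have hy' : y ∈ finSuppIdeal R J := by
          rwa [show (Ideal.Quotient.mkₐ R (finSuppIdeal R J)).toLinearMap y
              = Ideal.Quotient.mk (finSuppIdeal R J) y from rfl,
            Ideal.Quotient.eq_zero_iff_mem] at hy
        exact ⟨⟨y, hy'⟩, rfl⟩
      · rintro ⟨⟨z, hz⟩, rfl⟩
        show Ideal.Quotient.mk (finSuppIdeal R J) z = 0
        rwa [Ideal.Quotient.eq_zero_iff_mem]
    have hπsurj : Function.Surjective
        (⇑(Ideal.Quotient.mkₐ R (finSuppIdeal R J)).toLinearMap) :=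
      Ideal.Quotient.mk_surjective
    obtain ⟨t, ht⟩ := (rTensor_exact M hexact hπsurj ζ).mp hζQ
    -- evaluating at `k` outside a finite set kills `ζ`
    have key : ∃ F : Set J, F.Finite ∧ ∀ k ∉ F,
        LinearMap.rTensor M (Pi.evalAlgHom R (fun _ => R) k).toLinearMap
          (LinearMap.rTensor M
            (Submodule.restrictScalars R (finSuppIdeal R J)).subtype t) = 0 := by
      clear ht
      induction t using TensorProduct.induction_on with
      | zero => exact ⟨∅, Set.finite_empty, fun k _ => by simp⟩
      | tmul d μ =>
        refine ⟨Function.support d.1, d.2, fun k hk => ?_⟩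
        have hd : d.1 k = 0 := Function.notMem_support.mp hk
        simp only [LinearMap.rTensor_tmul]
        show (d.1 k) ⊗ₜ[R] μ = 0
        rw [hd, TensorProduct.zero_tmul]
      | add u v hu hv =>
        obtain ⟨F₁, hF₁, h₁⟩ := hu
        obtain ⟨F₂, hF₂, h₂⟩ := hv
        exact ⟨F₁ ∪ F₂, hF₁.union hF₂, fun k hk => by
          rw [map_add, map_add, h₁ k (fun h => hk (Set.mem_union_left _ h)),
            h₂ k (fun h => hk (Set.mem_union_right _ h)), add_zero]⟩
    obtain ⟨F, hFfin, hF⟩ := key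
    -- hence `β R x` vanishes outside `F`
    have hfsupp : ∀ k ∉ F, β R x k = 0 := by
      intro k hk
      have hζk : LinearMap.rTensor M (Pi.evalAlgHom R (fun _ => R) k).toLinearMap ζ = 0 := by
        rw [← ht]; exact hF k hk
      have hnat := hβnat (J → R) R (Pi.evalAlgHom R (fun _ => R) k) ζ
      rw [hζk, map_zero] at hnat
      have hkk := congrFun hnat.symm k
      rw [hβζ] at hkk
      simpa using hkk
    have hfin : (Function.support (β R x)).Finite :=
      hFfin.subset (fun k hk => by
        by_contra hkF
        exact hk (hfsupp k hkF))
    -- conclude `x = α R (β R x as a finsupp)`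
    refine ⟨Finsupp.ofSupportFinite (β R x) hfin, hβinj R ?_⟩
    rw [hαβ R]
    funext j
    exact congrFun Finsupp.ofSupportFinite_coe j
  exact ⟨Module.Basis.ofRepr ((TensorProduct.lid R M).symm.trans
    (LinearEquiv.ofBijective (α R) ⟨hαinj R, hsurj⟩).symm)⟩
end
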